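/- Let d, n ≥ 1 and M ≥ 0. There exists a constant C > 0, depending only on d, n and M, with the following property. Let W : ℝ^d → M_n(ℂ) be measurable with Frobenius norm |W(x)| ≤ M almost everywhere, and let η ∈ (0,1] and ρ ≥ 0 be such that η^{−d} ∫_{□_γ^η} |W(x)|² dx ≤ ρ for every γ ∈ ℤ^d. Then for every continuously differentiable compactly supported u : ℝ^d → ℂⁿ one has ( ∫_{ℝ^d} |W(x) u(x)|² dx )^{1/2} ≤ C (ρ^{1/2} + η^{1/2}) ‖u‖_{H¹}. -/

import Mathlib

open MeasureTheory

set_option maxHeartbeats 1000000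

noncomputable section

/-- `ℝ^d` with its Euclidean structure. -/
abbrev Ed (d : ℕ) := EuclideanSpace ℝ (Fin d)

/-- `ℂⁿ` with its Euclidean (Hermitian) structure. -/
abbrev Cn (n : ℕ) := EuclideanSpace ℂ (Fin n)

/-- The cell `□_γ^η = η•γ + [0,η]^d` of the rescaled lattice `ηℤ^d`. -/
def cell (d : ℕ) (η : ℝ) (γ : Fin d → ℤ) : Set (Ed d) :=
  {x | ∀ i, η * γ i ≤ x i ∧ x i ≤ η * γ i + η}

/-- Frobenius norm of a complex `n × n` matrix. -/
def frob {n : ℕ} (A : Matrix (Fin n) (Fin n) ℂ) : ℝ :=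
  Real.sqrt (∑ i, ∑ k, ‖A i k‖ ^ 2)

/-- Action of a matrix on a vector of `ℂⁿ`. -/
def matAct {n : ℕ} (A : Matrix (Fin n) (Fin n) ℂ) (v : Cn n) : Cn n :=
  WithLp.toLp 2 (fun i => ∑ k, A i k * v k)

/-- The `H¹` norm `(∫|u|² + ∫‖Du‖²)^{1/2}`, `Du` the total derivative. -/
def hnorm {d n : ℕ} (u : Ed d → Cn n) : ℝ :=
  Real.sqrt ((∫ x, ‖u x‖ ^ 2) + ∫ x, ‖fderiv ℝ u x‖ ^ 2)

/-! ### Auxiliary material -/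

section Aux

variable {d n : ℕ}

/-- The half-open cell. -/
def cell0 (d : ℕ) (η : ℝ) (γ : Fin d → ℤ) : Set (Ed d) :=
  {x | ∀ i, η * γ i ≤ x i ∧ x i < η * γ i + η}

lemma measurable_proj (i : Fin d) : Measurable fun x : Ed d => x i :=
  (EuclideanSpace.proj (𝕜 := ℝ) i).continuous.measurable

lemma measurableSet_cell (η : ℝ) (γ : Fin d → ℤ) : MeasurableSet (cell d η γ) := by
  have : cell d η γ = ⋂ i, ((fun x : Ed d => x i) ⁻¹' Set.Icc (η * γ i) (η * γ i + η)) := by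
    ext x; simp [cell, Set.mem_iInter, Set.mem_Icc]
  rw [this]
  exact MeasurableSet.iInter fun i => (measurable_proj i) measurableSet_Icc

lemma measurableSet_cell0 (η : ℝ) (γ : Fin d → ℤ) : MeasurableSet (cell0 d η γ) := by
  have : cell0 d η γ = ⋂ i, ((fun x : Ed d => x i) ⁻¹' Set.Ico (η * γ i) (η * γ i + η)) := by
    ext x; simp [cell0, Set.mem_iInter, Set.mem_Ico]
  rw [this]
  exact MeasurableSet.iInter fun i => (measurable_proj i) measurableSet_Ico

lemma cell0_subset_cell (η : ℝ) (γ : Fin d → ℤ) : cell0 d η γ ⊆ cell d η γ :=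
  fun x hx i => ⟨(hx i).1, (hx i).2.le⟩

lemma volume_cell {η : ℝ} (hη : 0 ≤ η) (γ : Fin d → ℤ) :
    volume (cell d η γ) = ENNReal.ofReal η ^ d := by
  have e := EuclideanSpace.volume_preserving_symm_measurableEquiv_toLp (Fin d)
  have hset : cell d η γ = (MeasurableEquiv.toLp 2 (Fin d → ℝ)).symm ⁻¹'
      (Set.univ.pi fun i => Set.Icc (η * γ i) (η * γ i + η)) := by
    ext x
    simp only [cell, Set.mem_preimage, Set.mem_pi, Set.mem_univ, true_implies,
      Set.mem_Icc, MeasurableEquiv.coe_toLp_symm, Set.mem_setOf_eq]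
  rw [hset, e.measure_preimage
    (MeasurableSet.univ_pi fun i => measurableSet_Icc).nullMeasurableSet]
  rw [volume_pi_pi]
  simp [Real.volume_Icc]

lemma volume_cell_toReal {η : ℝ} (hη : 0 ≤ η) (γ : Fin d → ℤ) :
    (volume (cell d η γ)).toReal = η ^ d := by
  rw [volume_cell hη γ, ENNReal.toReal_pow, ENNReal.toReal_ofReal hη]

lemma volume_cell_ne_top {η : ℝ} (hη : 0 ≤ η) (γ : Fin d → ℤ) :
    volume (cell d η γ) ≠ ⊤ := by
  rw [volume_cell hη γ]
  exact ENNReal.pow_ne_top ENNReal.ofReal_ne_top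

lemma volume_hyperplane (i : Fin d) (c : ℝ) : volume {x : Ed d | x i = c} = 0 := by
  have e := EuclideanSpace.volume_preserving_symm_measurableEquiv_toLp (Fin d)
  have hset : {x : Ed d | x i = c} = (MeasurableEquiv.toLp 2 (Fin d → ℝ)).symm ⁻¹'
      (Set.univ.pi fun j => if j = i then ({c} : Set ℝ) else Set.univ) := by
    ext x
    simp only [MeasurableEquiv.coe_toLp_symm, Set.mem_preimage, Set.mem_pi,
      Set.mem_univ, true_implies, Set.mem_setOf_eq]
    constructor
    · intro h j
      by_cases hj : j = i <;> simp [hj, h]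
    · intro h
      have := h i
      simpa using this
  rw [hset, e.measure_preimage
    (MeasurableSet.univ_pi fun j => by
      by_cases hj : j = i <;> simp [hj]).nullMeasurableSet]
  rw [volume_pi_pi]
  refine Finset.prod_eq_zero (Finset.mem_univ i) ?_
  simp

lemma cell_ae_eq_cell0 {η : ℝ} (hη : 0 ≤ η) (γ : Fin d → ℤ) :
    (cell d η γ : Set (Ed d)) =ᵐ[volume] cell0 d η γ := by
  have hsub : cell d η γ \ cell0 d η γ ⊆ ⋃ i, {x : Ed d | x i = η * γ i + η} := by
    intro x hx
    obtain ⟨h1, h2⟩ := hx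
    simp only [cell0, Set.mem_setOf_eq, not_forall] at h2
    obtain ⟨i, hi⟩ := h2
    have hle := h1 i
    refine Set.mem_iUnion.2 ⟨i, ?_⟩
    have : ¬ x i < η * γ i + η := fun hlt => hi ⟨hle.1, hlt⟩
    exact le_antisymm hle.2 (not_lt.1 this)
  have hnull : volume (cell d η γ \ cell0 d η γ) = 0 :=
    measure_mono_null hsub (measure_iUnion_null fun i => volume_hyperplane i _)
  have h2 : volume (cell0 d η γ \ cell d η γ) = 0 := by
    rw [Set.diff_eq_empty.2 (cell0_subset_cell η γ)]; simp
  rw [MeasureTheory.ae_eq_set]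
  exact ⟨hnull, h2⟩

lemma mem_cell0_iff {η : ℝ} (hη : 0 < η) {γ : Fin d → ℤ} {x : Ed d} :
    x ∈ cell0 d η γ ↔ ∀ i, γ i = ⌊x i / η⌋ := by
  constructor
  · intro h i
    have h1 := (h i).1
    have h2 := (h i).2
    symm
    rw [Int.floor_eq_iff]
    constructor
    · rw [le_div_iff₀ hη]; linarith
    · rw [div_lt_iff₀ hη]; push_cast; linarith
  · intro h i
    have hfl := h i
    have h1 : (⌊x i / η⌋ : ℝ) ≤ x i / η := Int.floor_le _
    have h2 : x i / η < ⌊x i / η⌋ + 1 := Int.lt_floor_add_one _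
    rw [hfl]
    constructor
    · calc η * (⌊x i / η⌋ : ℝ) ≤ η * (x i / η) := by
            exact mul_le_mul_of_nonneg_left h1 hη.le
        _ = x i := by field_simp
    · have : x i < η * ((⌊x i / η⌋ : ℝ) + 1) := by
        rw [← div_lt_iff₀' hη]
        exact h2
      linarith [this]

lemma iUnion_cell0 {η : ℝ} (hη : 0 < η) : (⋃ γ : Fin d → ℤ, cell0 d η γ) = Set.univ := by
  ext x
  simp only [Set.mem_iUnion, Set.mem_univ, iff_true]
  exact ⟨fun i => ⌊x i / η⌋, (mem_cell0_iff hη).2 fun i => rfl⟩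

lemma pairwise_disjoint_cell0 {η : ℝ} (hη : 0 < η) :
    Pairwise (Function.onFun Disjoint fun γ : Fin d → ℤ => cell0 d η γ) := by
  intro γ γ' hne
  rw [Function.onFun, Set.disjoint_left]
  intro x hx hx'
  apply hne
  funext i
  rw [(mem_cell0_iff hη).1 hx i, (mem_cell0_iff hη).1 hx' i]

/-- Convexity of the cell. -/
lemma cell_convex_combo {η : ℝ} {γ : Fin d → ℤ} {x y : Ed d} (hx : x ∈ cell d η γ)
    (hy : y ∈ cell d η γ) {t : ℝ} (ht0 : 0 ≤ t) (ht1 : t ≤ 1) :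
    (1 - t) • y + t • x ∈ cell d η γ := by
  intro i
  have hxi := hx i
  have hyi := hy i
  have happ : ((1 - t) • y + t • x) i = (1 - t) * y i + t * x i := by
    simp [PiLp.add_apply, PiLp.smul_apply, smul_eq_mul]
  rw [happ]
  constructor
  · nlinarith [hxi.1, hyi.1]
  · nlinarith [hxi.2, hyi.2]

lemma norm_sub_le_cell {η : ℝ} (hη : 0 ≤ η) {γ : Fin d → ℤ} {x y : Ed d}
    (hx : x ∈ cell d η γ) (hy : y ∈ cell d η γ) :
    ‖x - y‖ ≤ Real.sqrt d * η := by
  rw [EuclideanSpace.norm_eq]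
  have hbound : ∀ i, ‖(x - y) i‖ ^ 2 ≤ η ^ 2 := by
    intro i
    have : (x - y) i = x i - y i := by simp [PiLp.sub_apply]
    rw [this, Real.norm_eq_abs, sq_abs]
    have h1 := (hx i).1
    have h2 := (hx i).2
    have h3 := (hy i).1
    have h4 := (hy i).2
    nlinarith
  calc Real.sqrt (∑ i, ‖(x - y) i‖ ^ 2) ≤ Real.sqrt (∑ _i : Fin d, η ^ 2) :=
        Real.sqrt_le_sqrt (Finset.sum_le_sum fun i _ => hbound i)
    _ = Real.sqrt ((d : ℝ) * η ^ 2) := by rw [Finset.sum_const]; simp [mul_comm]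
    _ = Real.sqrt d * η := by
        rw [Real.sqrt_mul (Nat.cast_nonneg d), Real.sqrt_sq hη]

/-- Frobenius bound for the matrix action. -/
lemma matAct_norm_le (A : Matrix (Fin n) (Fin n) ℂ) (v : Cn n) :
    ‖matAct A v‖ ^ 2 ≤ frob A ^ 2 * ‖v‖ ^ 2 := by
  have hv : ‖v‖ ^ 2 = ∑ k, ‖v k‖ ^ 2 := by
    rw [EuclideanSpace.norm_eq, Real.sq_sqrt (Finset.sum_nonneg fun k _ => sq_nonneg _)]
  have hf : frob A ^ 2 = ∑ i, ∑ k, ‖A i k‖ ^ 2 := by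
    rw [frob, Real.sq_sqrt (Finset.sum_nonneg fun i _ =>
      Finset.sum_nonneg fun k _ => sq_nonneg _)]
  have hm : ‖matAct A v‖ ^ 2 = ∑ i, ‖matAct A v i‖ ^ 2 := by
    rw [EuclideanSpace.norm_eq, Real.sq_sqrt (Finset.sum_nonneg fun i _ => sq_nonneg _)]
  rw [hv, hf, hm, Finset.sum_mul]
  refine Finset.sum_le_sum fun i _ => ?_
  have h1 : ‖matAct A v i‖ ≤ ∑ k, ‖A i k‖ * ‖v k‖ := by
    show ‖∑ k, A i k * v k‖ ≤ _
    refine le_trans (norm_sum_le _ _) (le_of_eq ?_)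
    exact Finset.sum_congr rfl fun k _ => norm_mul _ _
  have h2 : ‖matAct A v i‖ ^ 2 ≤ (∑ k, ‖A i k‖ * ‖v k‖) ^ 2 := by
    have := norm_nonneg (matAct A v i)
    nlinarith [h1]
  refine h2.trans ?_
  have := Finset.sum_mul_sq_le_sq_mul_sq Finset.univ (fun k => ‖A i k‖) (fun k => ‖v k‖)
  simpa using this

/-- Scaling estimate: integrating `h (a • y + c)` over `Q` is at most `2^d` times the
integral of `h` over `Q`, when `1/2 ≤ a ≤ 1` and the affine map sends `Q` into `Q`. -/
lemma scaling_le {Q : Set (Ed d)} (hQ : MeasurableSet Q) (hQfin : volume Q ≠ ⊤)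
    {h : Ed d → ℝ} (hc : Continuous h) (h0 : ∀ z, 0 ≤ h z) {B : ℝ} (hB : ∀ z, h z ≤ B)
    {a : ℝ} (ha : 1 / 2 ≤ a) (c : Ed d)
    (hmaps : ∀ y ∈ Q, a • y + c ∈ Q) :
    ∫ y in Q, h (a • y + c) ≤ 2 ^ d * ∫ y in Q, h y := by
  have ha0 : (0 : ℝ) < a := lt_of_lt_of_le (by norm_num) ha
  set G : Ed d → ℝ := Q.indicator h with hG
  have hψm : Measurable fun y : Ed d => a • y + c :=
    ((measurable_id.const_smul a).add_const c)
  have hpre : MeasurableSet ((fun y : Ed d => a • y + c) ⁻¹' Q) := hψm hQ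
  have hGnonneg : ∀ z, 0 ≤ G z := fun z => Set.indicator_nonneg (fun z _ => h0 z) z
  have hGψ : (fun y : Ed d => G (a • y + c))
      = ((fun y : Ed d => a • y + c) ⁻¹' Q).indicator (fun y => h (a • y + c)) := by
    funext y
    by_cases hy : a • y + c ∈ Q <;>
      simp [hG, Set.indicator, hy]
  have hprevol : volume ((fun y : Ed d => a • y + c) ⁻¹' Q) ≠ ⊤ := by
    have : (fun y : Ed d => a • y + c) ⁻¹' Q = (a • ·) ⁻¹' ((· + c) ⁻¹' Q) := rfl
    rw [this, MeasureTheory.Measure.addHaar_preimage_smul volume (ne_of_gt ha0)]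
    have : volume ((· + c) ⁻¹' Q) = volume Q := by
      exact measure_preimage_add_right volume c Q
    rw [this]
    exact ENNReal.mul_ne_top ENNReal.ofReal_ne_top hQfin
  have hint : Integrable (fun y : Ed d => G (a • y + c)) := by
    rw [hGψ, integrable_indicator_iff hpre]
    refine Measure.integrableOn_of_bounded (M := B) hprevol
      ((hc.comp ((continuous_id.const_smul a).add continuous_const)).aestronglyMeasurable)
      (ae_of_all _ fun y => ?_)
    rw [Real.norm_eq_abs, abs_of_nonneg (h0 _)]
    exact hB _
  calc ∫ y in Q, h (a • y + c)
      = ∫ y in Q, G (a • y + c) := by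
        refine setIntegral_congr_fun hQ fun y hy => ?_
        rw [hG, Set.indicator_of_mem (hmaps y hy)]
    _ ≤ ∫ y, G (a • y + c) := setIntegral_le_integral hint (ae_of_all _ fun y => hGnonneg _)
    _ = |(a ^ d)⁻¹| • ∫ z, G (z + c) := by
        have := MeasureTheory.Measure.integral_comp_smul (volume : Measure (Ed d))
          (fun z => G (z + c)) a
        rw [finrank_euclideanSpace_fin] at this
        simpa using this
    _ = (a ^ d)⁻¹ * ∫ z, G z := by
        rw [integral_add_right_eq_self (fun z => G z) c]
        rw [abs_of_nonneg (inv_nonneg.2 (pow_nonneg ha0.le d)), smul_eq_mul]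
    _ ≤ 2 ^ d * ∫ z, G z := by
        refine mul_le_mul_of_nonneg_right ?_ (integral_nonneg hGnonneg)
        rw [inv_le_comm₀ (pow_pos ha0 d) (by positivity)]
        calc ((2 : ℝ) ^ d)⁻¹ = (1 / 2) ^ d := by
              rw [one_div, inv_pow]
          _ ≤ a ^ d := pow_le_pow_left₀ (by norm_num) ha d
    _ = 2 ^ d * ∫ y in Q, h y := by rw [hG, integral_indicator hQ]

/-- Pointwise Fundamental-Theorem-of-Calculus estimate along the segment from `y` to `x`. -/
lemma ptwise_sq_le {u : Ed d → Cn n} (hu : ContDiff ℝ 1 u) {η : ℝ} (hη : 0 ≤ η)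
    {γ : Fin d → ℤ} {x y : Ed d} (hx : x ∈ cell d η γ) (hy : y ∈ cell d η γ) :
    ‖u x‖ ^ 2 ≤ ‖u y‖ ^ 2 + 2 * Real.sqrt d * η *
      ∫ t in (0:ℝ)..1, ‖u (y + t • (x - y))‖ * ‖fderiv ℝ u (y + t • (x - y))‖ := by
  set σ : ℝ → Ed d := fun t => y + t • (x - y) with hσdef
  have hσc : Continuous σ := continuous_const.add (continuous_id.smul continuous_const)
  have hud : Differentiable ℝ u := hu.differentiable one_ne_zero
  have hfdc : Continuous fun z => fderiv ℝ u z := hu.continuous_fderiv one_ne_zero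
  have hσ : ∀ t : ℝ, HasDerivAt σ (x - y) t := by
    intro t
    simpa [hσdef] using ((hasDerivAt_id t).smul_const (x - y)).const_add y
  have hf : ∀ t : ℝ, HasDerivAt (fun s => u (σ s)) (fderiv ℝ u (σ t) (x - y)) t :=
    fun t => ((hud (σ t)).hasFDerivAt).comp_hasDerivAt t (hσ t)
  set D : ℝ → ℝ := fun t =>
    (inner ℝ (u (σ t)) (fderiv ℝ u (σ t) (x - y)) : ℝ)
      + (inner ℝ (fderiv ℝ u (σ t) (x - y)) (u (σ t)) : ℝ) with hDdef
  have hD : ∀ t : ℝ, HasDerivAt (fun s => ‖u (σ s)‖ ^ 2) (D t) t := by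
    intro t
    have h1 := HasDerivAt.inner ℝ (hf t) (hf t)
    have heq : (fun s => (inner ℝ (u (σ s)) (u (σ s)) : ℝ)) = fun s => ‖u (σ s)‖ ^ 2 :=
      funext fun s => real_inner_self_eq_norm_sq _
    rw [heq] at h1
    exact h1
  have hDc : Continuous D := by
    have h1 : Continuous fun t => u (σ t) := hu.continuous.comp hσc
    have h2 : Continuous fun t => fderiv ℝ u (σ t) (x - y) :=
      (hfdc.comp hσc).clm_apply continuous_const
    exact ((h1.inner h2)).add (h2.inner h1)
  have hftc : (∫ t in (0:ℝ)..1, D t) = ‖u x‖ ^ 2 - ‖u y‖ ^ 2 := by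
    have := intervalIntegral.integral_eq_sub_of_hasDerivAt
      (f := fun s => ‖u (σ s)‖ ^ 2) (f' := D) (a := (0:ℝ)) (b := 1)
      (fun t _ => hD t) (hDc.intervalIntegrable 0 1)
    rw [this]
    have hσ1 : σ 1 = x := by simp [hσdef]
    have hσ0 : σ 0 = y := by simp [hσdef]
    simp only [hσ1, hσ0]
  have hbnd : ∀ t ∈ Set.Icc (0:ℝ) 1,
      D t ≤ 2 * Real.sqrt d * η * (‖u (σ t)‖ * ‖fderiv ℝ u (σ t)‖) := by
    intro t _
    rw [hDdef]
    simp only []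
    have hinner1 : (inner ℝ (u (σ t)) (fderiv ℝ u (σ t) (x - y)) : ℝ)
        ≤ ‖u (σ t)‖ * ‖fderiv ℝ u (σ t) (x - y)‖ := real_inner_le_norm _ _
    have hinner2 : (inner ℝ (fderiv ℝ u (σ t) (x - y)) (u (σ t)) : ℝ)
        ≤ ‖u (σ t)‖ * ‖fderiv ℝ u (σ t) (x - y)‖ := by
      rw [real_inner_comm]; exact real_inner_le_norm _ _
    have hop : ‖fderiv ℝ u (σ t) (x - y)‖ ≤ ‖fderiv ℝ u (σ t)‖ * ‖x - y‖ :=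
      ContinuousLinearMap.le_opNorm _ _
    have hxy : ‖x - y‖ ≤ Real.sqrt d * η := norm_sub_le_cell hη hx hy
    have h0u : (0:ℝ) ≤ ‖u (σ t)‖ := norm_nonneg _
    have h0f : (0:ℝ) ≤ ‖fderiv ℝ u (σ t)‖ := norm_nonneg _
    have h0xy : (0:ℝ) ≤ ‖x - y‖ := norm_nonneg _
    have h0s : (0:ℝ) ≤ Real.sqrt d * η := mul_nonneg (Real.sqrt_nonneg _) hη
    nlinarith [mul_le_mul_of_nonneg_left hop h0u,
      mul_le_mul_of_nonneg_left hxy (mul_nonneg h0u h0f)]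
  have hmono : (∫ t in (0:ℝ)..1, D t)
      ≤ ∫ t in (0:ℝ)..1, 2 * Real.sqrt d * η * (‖u (σ t)‖ * ‖fderiv ℝ u (σ t)‖) := by
    refine intervalIntegral.integral_mono_on zero_le_one (hDc.intervalIntegrable 0 1) ?_ hbnd
    exact (continuous_const.mul
      ((hu.continuous.comp hσc).norm.mul ((hfdc.comp hσc).norm))).intervalIntegrable 0 1
  have hpull : (∫ t in (0:ℝ)..1, 2 * Real.sqrt d * η * (‖u (σ t)‖ * ‖fderiv ℝ u (σ t)‖))
      = 2 * Real.sqrt d * η * ∫ t in (0:ℝ)..1, ‖u (σ t)‖ * ‖fderiv ℝ u (σ t)‖ := by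
    rw [intervalIntegral.integral_const_mul]
  rw [hftc] at hmono
  rw [hpull] at hmono
  linarith

section CellEstimate

variable {u : Ed d → Cn n}

/-- The per-cell estimate. -/
lemma cell_estimate (hu : ContDiff ℝ 1 u) (hsupp : HasCompactSupport u)
    {w : Ed d → ℝ} (hwm : Measurable w) (hw0 : ∀ x, 0 ≤ w x) {M2 : ℝ}
    (hwb : ∀ᵐ x, w x ≤ M2) (hM2 : 0 ≤ M2)
    {η ρ : ℝ} (hη : 0 < η) (hρ : 0 ≤ ρ) (γ : Fin d → ℤ)
    (hcellw : ∫ x in cell d η γ, w x ≤ ρ * η ^ d) :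
    ∫ x in cell d η γ, w x * ‖u x‖ ^ 2
      ≤ ρ * (∫ x in cell d η γ, ‖u x‖ ^ 2)
        + (2 ^ (d + 1) * Real.sqrt d * M2) * η *
            ∫ x in cell d η γ, ‖u x‖ * ‖fderiv ℝ u x‖ := by
  obtain ⟨Q, hQdef⟩ : ∃ Q : Set (Ed d), Q = cell d η γ := ⟨_, rfl⟩
  obtain ⟨g, hgdef⟩ : ∃ g : Ed d → ℝ, g = fun x => ‖u x‖ ^ 2 := ⟨_, rfl⟩
  obtain ⟨h, hhdef⟩ : ∃ h : Ed d → ℝ, h = fun x => ‖u x‖ * ‖fderiv ℝ u x‖ := ⟨_, rfl⟩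
  have hQm : MeasurableSet Q := hQdef ▸ measurableSet_cell η γ
  have hQfin : volume Q ≠ ⊤ := hQdef ▸ volume_cell_ne_top hη.le γ
  have hVol : (volume Q).toReal = η ^ d := hQdef ▸ volume_cell_toReal hη.le γ
  have hQlt : volume Q < ⊤ := lt_top_iff_ne_top.2 hQfin
  haveI hQfinM : IsFiniteMeasure (volume.restrict Q) :=
    ⟨by rw [Measure.restrict_apply_univ]; exact hQlt⟩
  haveI hIocM : IsFiniteMeasure (volume.restrict (Set.Ioc (0:ℝ) (1/2))) :=
    ⟨by rw [Measure.restrict_apply_univ, Real.volume_Ioc]; exact ENNReal.ofReal_lt_top⟩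
  have hgc : Continuous g := by rw [hgdef]; exact (hu.continuous.norm).pow 2
  have hfdc : Continuous fun z => fderiv ℝ u z := hu.continuous_fderiv one_ne_zero
  have hhc : Continuous h := by rw [hhdef]; exact (hu.continuous.norm).mul hfdc.norm
  have hg0 : ∀ x, 0 ≤ g x := by rw [hgdef]; exact fun x => sq_nonneg _
  have hh0 : ∀ x, 0 ≤ h x := by
    rw [hhdef]; exact fun x => mul_nonneg (norm_nonneg _) (norm_nonneg _)
  obtain ⟨Bu, hBu⟩ := hsupp.exists_bound_of_continuous hu.continuous
  obtain ⟨Bf, hBf⟩ := (hsupp.fderiv (𝕜 := ℝ)).exists_bound_of_continuous hfdc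
  have hBu0 : 0 ≤ Bu := le_trans (norm_nonneg _) (hBu 0)
  have hBf0 : 0 ≤ Bf := le_trans (norm_nonneg _) (hBf 0)
  obtain ⟨Bg, hBgdef⟩ : ∃ b : ℝ, b = Bu * Bu := ⟨_, rfl⟩
  obtain ⟨Bh, hBhdef⟩ : ∃ b : ℝ, b = Bu * Bf := ⟨_, rfl⟩
  have hBg' : ∀ x, g x ≤ Bg := by
    intro x
    have := hBu x
    have h0 := norm_nonneg (u x)
    rw [hgdef, hBgdef]
    simp only [pow_two]
    nlinarith
  have hBh' : ∀ x, h x ≤ Bh := by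
    intro x
    have h1 := hBu x
    have h2 := hBf x
    have h0 := norm_nonneg (u x)
    have h0' := norm_nonneg (fderiv ℝ u x)
    rw [hhdef, hBhdef]
    show ‖u x‖ * ‖fderiv ℝ u x‖ ≤ Bu * Bf
    nlinarith
  have hBh0 : 0 ≤ Bh := le_trans (hh0 0) (hBh' 0)
  have hBg0 : 0 ≤ Bg := le_trans (hg0 0) (hBg' 0)
  -- the segment integrals
  obtain ⟨It, hItdef⟩ : ∃ f : Ed d → Ed d → ℝ,
      f = fun x y => ∫ t in (0:ℝ)..1, h (y + t • (x - y)) := ⟨_, rfl⟩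
  obtain ⟨J, hJdef⟩ : ∃ f : Ed d → Ed d → ℝ,
      f = fun x y => ∫ t in (0:ℝ)..(1/2), h (y + t • (x - y)) := ⟨_, rfl⟩
  have hseg : Continuous
      (Function.uncurry fun (p : Ed d × Ed d) (t : ℝ) => h (p.2 + t • (p.1 - p.2))) := by
    have : Continuous fun q : (Ed d × Ed d) × ℝ => h (q.1.2 + q.2 • (q.1.1 - q.1.2)) := by
      apply hhc.comp
      exact (continuous_fst.snd).add
        (continuous_snd.smul (continuous_fst.fst.sub continuous_fst.snd))
    exact this
  have hItc : Continuous fun p : Ed d × Ed d => It p.1 p.2 := by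
    simp only [hItdef]
    exact intervalIntegral.continuous_parametric_intervalIntegral_of_continuous' hseg 0 1
  have hJc : Continuous fun p : Ed d × Ed d => J p.1 p.2 := by
    simp only [hJdef]
    exact intervalIntegral.continuous_parametric_intervalIntegral_of_continuous' hseg 0 (1/2)
  have hItc1 : ∀ x : Ed d, Continuous fun y => It x y := fun x =>
    hItc.comp (continuous_const.prodMk continuous_id)
  have hItc2 : ∀ y : Ed d, Continuous fun x => It x y := fun y =>
    hItc.comp (continuous_id.prodMk continuous_const)
  have hJc1 : ∀ x : Ed d, Continuous fun y => J x y := fun x =>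
    hJc.comp (continuous_const.prodMk continuous_id)
  have hJc2 : ∀ y : Ed d, Continuous fun x => J x y := fun y =>
    hJc.comp (continuous_id.prodMk continuous_const)
  have hIt0 : ∀ x y, 0 ≤ It x y := by
    rw [hItdef]
    exact fun x y => intervalIntegral.integral_nonneg zero_le_one fun t _ => hh0 _
  have hJ0 : ∀ x y, 0 ≤ J x y := by
    rw [hJdef]
    exact fun x y => intervalIntegral.integral_nonneg (by norm_num) fun t _ => hh0 _
  have hsegIntble : ∀ (x y : Ed d) (b : ℝ),
      IntervalIntegrable (fun t => h (y + t • (x - y))) volume 0 b := fun x y b =>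
    (hhc.comp (continuous_const.add (continuous_id.smul continuous_const))).intervalIntegrable 0 b
  have hItB : ∀ x y, It x y ≤ Bh := by
    intro x y
    rw [hItdef]
    have : (∫ t in (0:ℝ)..1, h (y + t • (x - y))) ≤ ∫ _t in (0:ℝ)..1, Bh :=
      intervalIntegral.integral_mono_on zero_le_one (hsegIntble x y 1)
        (continuous_const.intervalIntegrable 0 1) (fun t _ => hBh' _)
    simpa using this
  have hJB : ∀ x y, J x y ≤ Bh := by
    intro x y
    rw [hJdef]
    have h1 : (∫ t in (0:ℝ)..(1/2), h (y + t • (x - y))) ≤ ∫ _t in (0:ℝ)..(1/2), Bh :=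
      intervalIntegral.integral_mono_on (by norm_num) (hsegIntble x y (1/2))
        (continuous_const.intervalIntegrable 0 (1/2)) (fun t _ => hBh' _)
    have h2 : (∫ _t in (0:ℝ)..(1/2), Bh) = (1/2) * Bh := by
      rw [intervalIntegral.integral_const, smul_eq_mul]; norm_num
    rw [h2] at h1
    linarith
  -- F x = ∫_{y ∈ Q} It x y
  obtain ⟨F, hFdef⟩ : ∃ F : Ed d → ℝ, F = fun x => ∫ y in Q, It x y := ⟨_, rfl⟩
  have hF0 : ∀ x, 0 ≤ F x := by
    rw [hFdef]
    exact fun x => setIntegral_nonneg hQm fun y _ => hIt0 x y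
  have hItIntble : ∀ x : Ed d, IntegrableOn (fun y => It x y) Q :=
    fun x => Measure.integrableOn_of_bounded (M := Bh) hQfin
      (hItc1 x).aestronglyMeasurable
      (ae_of_all _ fun y => by
        rw [Real.norm_eq_abs, abs_of_nonneg (hIt0 x y)]; exact hItB x y)
  have hFB : ∀ x, F x ≤ η ^ d * Bh := by
    intro x
    rw [hFdef]
    calc (∫ y in Q, It x y) ≤ ∫ _y in Q, Bh :=
          setIntegral_mono_on (hItIntble x)
            (integrableOn_const hQfin) hQm (fun y _ => hItB x y)
      _ = η ^ d * Bh := by rw [setIntegral_const, measureReal_def, hVol, smul_eq_mul]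
  have hFc : Continuous F := by
    rw [hFdef]
    refine continuous_of_dominated (F := fun (x : Ed d) (y : Ed d) => It x y)
      (bound := fun _ => Bh) (μ := volume.restrict Q) ?_ ?_ ?_ ?_
    · intro x
      exact (hItc1 x).aestronglyMeasurable
    · intro x
      refine ae_of_all _ fun y => ?_
      rw [Real.norm_eq_abs, abs_of_nonneg (hIt0 x y)]
      exact hItB x y
    · exact integrable_const Bh
    · exact ae_of_all _ fun y => hItc2 y
  -- Step A: pointwise estimate integrated over y.
  have stepA : ∀ x ∈ Q, η ^ d * (w x * g x)
      ≤ w x * (∫ y in Q, g y) + (2 * Real.sqrt d * η) * (w x * F x) := by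
    intro x hx
    have hgon : IntegrableOn g Q := Measure.integrableOn_of_bounded (M := Bg) hQfin
      hgc.aestronglyMeasurable (ae_of_all _ fun y => by
        rw [Real.norm_eq_abs, abs_of_nonneg (hg0 y)]; exact hBg' y)
    have h1 : η ^ d * g x ≤ (∫ y in Q, g y) + (2 * Real.sqrt d * η) * F x := by
      have hconst : (∫ _y in Q, g x) = η ^ d * g x := by
        rw [setIntegral_const, measureReal_def, hVol, smul_eq_mul]
      have hmono : (∫ _y in Q, g x)
          ≤ ∫ y in Q, (g y + (2 * Real.sqrt d * η) * It x y) := by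
        refine setIntegral_mono_on
          (integrableOn_const hQfin) ?_ hQm ?_
        · exact hgon.add ((hItIntble x).const_mul _)
        · intro y hy
          have hx' : x ∈ cell d η γ := hQdef ▸ hx
          have hy' : y ∈ cell d η γ := hQdef ▸ hy
          have := ptwise_sq_le hu hη.le hx' hy'
          simp only [hgdef, hItdef, hhdef]
          exact this
      have hsplit : (∫ y in Q, (g y + (2 * Real.sqrt d * η) * It x y))
          = (∫ y in Q, g y) + (2 * Real.sqrt d * η) * F x := by
        rw [integral_add hgon ((hItIntble x).const_mul _), integral_const_mul, hFdef]
      rw [hconst, hsplit] at hmono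
      exact hmono
    have h2 := mul_le_mul_of_nonneg_left h1 (hw0 x)
    calc η ^ d * (w x * g x) = w x * (η ^ d * g x) := by ring
      _ ≤ w x * ((∫ y in Q, g y) + (2 * Real.sqrt d * η) * F x) := h2
      _ = w x * (∫ y in Q, g y) + (2 * Real.sqrt d * η) * (w x * F x) := by ring
  -- integrabilities on Q
  have hwQ : IntegrableOn w Q := by
    refine Measure.integrableOn_of_bounded (M := max M2 0) hQfin hwm.aestronglyMeasurable ?_
    refine ae_restrict_of_ae (hwb.mono fun x hx => ?_)
    rw [Real.norm_eq_abs, abs_of_nonneg (hw0 x)]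
    exact le_max_of_le_left hx
  have hwgQ : IntegrableOn (fun x => w x * g x) Q := by
    refine Measure.integrableOn_of_bounded (M := max M2 0 * Bg) hQfin
      (hwm.aestronglyMeasurable.mul hgc.aestronglyMeasurable) ?_
    refine ae_restrict_of_ae (hwb.mono fun x hx => ?_)
    rw [Real.norm_eq_abs, abs_of_nonneg (mul_nonneg (hw0 x) (hg0 x))]
    exact mul_le_mul (le_max_of_le_left hx) (hBg' x) (hg0 x) (le_max_right _ _)
  have hwFQ : IntegrableOn (fun x => w x * F x) Q := by
    refine Measure.integrableOn_of_bounded (M := max M2 0 * (η ^ d * Bh)) hQfin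
      (hwm.aestronglyMeasurable.mul hFc.aestronglyMeasurable) ?_
    refine ae_restrict_of_ae (hwb.mono fun x hx => ?_)
    rw [Real.norm_eq_abs, abs_of_nonneg (mul_nonneg (hw0 x) (hF0 x))]
    refine mul_le_mul (le_max_of_le_left hx) (hFB x) (hF0 x) (le_max_right _ _)
  -- Step B: integrate Step A over x ∈ Q.
  have stepB : η ^ d * ∫ x in Q, w x * g x
      ≤ (∫ x in Q, w x) * (∫ y in Q, g y)
        + (2 * Real.sqrt d * η) * ∫ x in Q, w x * F x := by
    have hmono : (∫ x in Q, η ^ d * (w x * g x))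
        ≤ ∫ x in Q, (w x * (∫ y in Q, g y) + (2 * Real.sqrt d * η) * (w x * F x)) := by
      refine setIntegral_mono_on (hwgQ.const_mul _) ?_ hQm stepA
      exact (hwQ.mul_const _).add (hwFQ.const_mul _)
    rw [integral_const_mul] at hmono
    rw [integral_add (hwQ.mul_const _) (hwFQ.const_mul _), integral_mul_const,
      integral_const_mul] at hmono
    exact hmono
  -- Step C
  have hgQnonneg : 0 ≤ ∫ y in Q, g y := setIntegral_nonneg hQm fun y _ => hg0 y
  have stepC : (∫ x in Q, w x) * (∫ y in Q, g y) ≤ ρ * η ^ d * (∫ y in Q, g y) := by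
    refine mul_le_mul_of_nonneg_right ?_ hgQnonneg
    rw [hQdef]
    exact hcellw
  -- Step D
  have stepD : (∫ x in Q, w x * F x) ≤ M2 * ∫ x in Q, F x := by
    have h1 : (∫ x in Q, w x * F x) ≤ ∫ x in Q, M2 * F x := by
      refine integral_mono_ae hwFQ ?_ ?_
      · exact (Measure.integrableOn_of_bounded (M := η ^ d * Bh) hQfin
          hFc.aestronglyMeasurable (ae_of_all _ fun x => by
            rw [Real.norm_eq_abs, abs_of_nonneg (hF0 x)]; exact hFB x)).const_mul _
      · refine ae_restrict_of_ae (hwb.mono fun x hx => ?_)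
        exact mul_le_mul_of_nonneg_right hx (hF0 x)
    rwa [integral_const_mul] at h1
  -- Step E : ∫_{x∈Q} F ≤ 2^d η^d ∫_Q h
  have hsegIntble2 : ∀ (x y : Ed d) (a b : ℝ),
      IntervalIntegrable (fun t => h (y + t • (x - y))) volume a b := fun x y a b =>
    (hhc.comp (continuous_const.add (continuous_id.smul continuous_const))).intervalIntegrable a b
  have hsplitIt : ∀ x y : Ed d, It x y = J x y + J y x := by
    intro x y
    have hadj : (∫ t in (0:ℝ)..(1/2), h (y + t • (x - y)))
        + (∫ t in (1/2:ℝ)..1, h (y + t • (x - y)))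
        = ∫ t in (0:ℝ)..1, h (y + t • (x - y)) :=
      intervalIntegral.integral_add_adjacent_intervals (hsegIntble2 x y 0 (1/2))
        (hsegIntble2 x y (1/2) 1)
    have hrefl : (∫ t in (1/2:ℝ)..1, h (y + t • (x - y)))
        = ∫ t in (0:ℝ)..(1/2), h (x + t • (y - x)) := by
      have h1 := intervalIntegral.integral_comp_sub_left
        (a := (0:ℝ)) (b := 1/2) (fun t => h (y + t • (x - y))) 1
      norm_num at h1
      rw [← h1]
      refine intervalIntegral.integral_congr fun s _ => ?_
      congr 1
      module
    rw [hItdef, hJdef]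
    simp only []
    rw [← hadj, hrefl]
  have hJIntble1 : ∀ x : Ed d, IntegrableOn (fun y => J x y) Q := fun x =>
    Measure.integrableOn_of_bounded (M := Bh) hQfin (hJc1 x).aestronglyMeasurable
      (ae_of_all _ fun y => by
        rw [Real.norm_eq_abs, abs_of_nonneg (hJ0 x y)]; exact hJB x y)
  have hJIntble2 : ∀ x : Ed d, IntegrableOn (fun y => J y x) Q := fun x =>
    Measure.integrableOn_of_bounded (M := Bh) hQfin (hJc2 x).aestronglyMeasurable
      (ae_of_all _ fun y => by
        rw [Real.norm_eq_abs, abs_of_nonneg (hJ0 y x)]; exact hJB y x)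
  have hFsplit : ∀ x : Ed d, F x = (∫ y in Q, J x y) + ∫ y in Q, J y x := by
    intro x
    rw [hFdef]
    simp only [hsplitIt]
    exact integral_add (hJIntble1 x) (hJIntble2 x)
  -- continuity and bounds for the partial integrals of J
  have hA0 : ∀ x : Ed d, 0 ≤ ∫ y in Q, J x y := fun x =>
    setIntegral_nonneg hQm fun y _ => hJ0 x y
  have hB0 : ∀ x : Ed d, 0 ≤ ∫ y in Q, J y x := fun x =>
    setIntegral_nonneg hQm fun y _ => hJ0 y x
  have hAB : ∀ x : Ed d, (∫ y in Q, J x y) ≤ η ^ d * Bh := by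
    intro x
    calc (∫ y in Q, J x y) ≤ ∫ _y in Q, Bh :=
          setIntegral_mono_on (hJIntble1 x)
            (integrableOn_const hQfin) hQm (fun y _ => hJB x y)
      _ = η ^ d * Bh := by rw [setIntegral_const, measureReal_def, hVol, smul_eq_mul]
  have hBB : ∀ x : Ed d, (∫ y in Q, J y x) ≤ η ^ d * Bh := by
    intro x
    calc (∫ y in Q, J y x) ≤ ∫ _y in Q, Bh :=
          setIntegral_mono_on (hJIntble2 x)
            (integrableOn_const hQfin) hQm (fun y _ => hJB y x)
      _ = η ^ d * Bh := by rw [setIntegral_const, measureReal_def, hVol, smul_eq_mul]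
  have hAc : Continuous fun x : Ed d => ∫ y in Q, J x y := by
    refine continuous_of_dominated (F := fun (x : Ed d) (y : Ed d) => J x y)
      (bound := fun _ => Bh) (μ := volume.restrict Q) ?_ ?_ ?_ ?_
    · intro x
      exact (hJc1 x).aestronglyMeasurable
    · intro x
      refine ae_of_all _ fun y => ?_
      rw [Real.norm_eq_abs, abs_of_nonneg (hJ0 x y)]
      exact hJB x y
    · exact integrable_const Bh
    · exact ae_of_all _ fun y => hJc2 y
  have hBc : Continuous fun x : Ed d => ∫ y in Q, J y x := by
    refine continuous_of_dominated (F := fun (x : Ed d) (y : Ed d) => J y x)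
      (bound := fun _ => Bh) (μ := volume.restrict Q) ?_ ?_ ?_ ?_
    · intro x
      exact (hJc2 x).aestronglyMeasurable
    · intro x
      refine ae_of_all _ fun y => ?_
      rw [Real.norm_eq_abs, abs_of_nonneg (hJ0 y x)]
      exact hJB y x
    · exact integrable_const Bh
    · exact ae_of_all _ fun y => hJc1 y
  -- swap of the double integral of J y x
  have hswap : (∫ x in Q, ∫ y in Q, J y x) = ∫ y in Q, ∫ x in Q, J y x := by
    refine integral_integral_swap ?_
    refine ⟨(hJc.comp continuous_swap).aestronglyMeasurable, ?_⟩
    refine HasFiniteIntegral.of_bounded (C := Bh) (ae_of_all _ fun p => ?_)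
    simp only [Function.uncurry]
    rw [Real.norm_eq_abs, abs_of_nonneg (hJ0 p.2 p.1)]
    exact hJB p.2 p.1
  -- scaling bound for the inner integral
  have hQh : 0 ≤ ∫ z in Q, h z := setIntegral_nonneg hQm fun z _ => hh0 z
  have hP1 : ∀ x ∈ Q, (∫ y in Q, J x y) ≤ (1/2) * (2 ^ d * ∫ z in Q, h z) := by
    intro x hx
    have hJset : (∫ y in Q, J x y)
        = ∫ y in Q, ∫ t in Set.Ioc (0:ℝ) (1/2), h (y + t • (x - y)) := by
      refine setIntegral_congr_fun hQm fun y _ => ?_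
      rw [hJdef]
      simp only []
      rw [intervalIntegral.integral_of_le (by norm_num : (0:ℝ) ≤ 1/2)]
    have hswap2 : (∫ y in Q, ∫ t in Set.Ioc (0:ℝ) (1/2), h (y + t • (x - y)))
        = ∫ t in Set.Ioc (0:ℝ) (1/2), ∫ y in Q, h (y + t • (x - y)) := by
      refine integral_integral_swap ?_
      refine ⟨?_, ?_⟩
      · refine Continuous.aestronglyMeasurable ?_
        exact hhc.comp (continuous_fst.add (continuous_snd.smul
          (continuous_const.sub continuous_fst)))
      · refine HasFiniteIntegral.of_bounded (C := Bh) (ae_of_all _ fun p => ?_)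
        simp only [Function.uncurry]
        rw [Real.norm_eq_abs, abs_of_nonneg (hh0 _)]
        exact hBh' _
    have hinner : ∀ t ∈ Set.Ioc (0:ℝ) (1/2),
        (∫ y in Q, h (y + t • (x - y))) ≤ 2 ^ d * ∫ z in Q, h z := by
      intro t ht
      have hcong : (fun y : Ed d => h (y + t • (x - y)))
          = fun y : Ed d => h ((1 - t) • y + t • x) := by
        funext y
        congr 1
        module
      rw [hcong]
      refine scaling_le hQm hQfin hhc hh0 hBh' (a := 1 - t) (by linarith [ht.2]) (t • x) ?_
      intro y hy
      have hx' : x ∈ cell d η γ := hQdef ▸ hx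
      have hy' : y ∈ cell d η γ := hQdef ▸ hy
      have := cell_convex_combo hx' hy' ht.1.le (le_trans ht.2 (by norm_num))
      rw [hQdef]
      exact this
    have houter : (∫ t in Set.Ioc (0:ℝ) (1/2), ∫ y in Q, h (y + t • (x - y)))
        ≤ (1/2) * (2 ^ d * ∫ z in Q, h z) := by
      have hb : (∫ t in Set.Ioc (0:ℝ) (1/2), ∫ y in Q, h (y + t • (x - y)))
          ≤ ∫ _t in Set.Ioc (0:ℝ) (1/2), (2 ^ d * ∫ z in Q, h z) := by
        refine integral_mono_of_nonneg ?_ (integrable_const _) ?_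
        · exact ae_of_all _ fun t => setIntegral_nonneg hQm fun y _ => hh0 _
        · exact (ae_restrict_iff' measurableSet_Ioc).2 (ae_of_all _ hinner)
      have hc : (∫ _t in Set.Ioc (0:ℝ) (1/2), ((2:ℝ) ^ d * ∫ z in Q, h z))
          = (1/2) * (2 ^ d * ∫ z in Q, h z) := by
        rw [setIntegral_const, Real.volume_real_Ioc, smul_eq_mul]
        norm_num
      rw [hc] at hb
      exact hb
    rw [hJset, hswap2]
    exact houter
  have hintA : (∫ x in Q, ∫ y in Q, J x y) ≤ η ^ d * ((1/2) * (2 ^ d * ∫ z in Q, h z)) := by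
    have hb : (∫ x in Q, ∫ y in Q, J x y)
        ≤ ∫ _x in Q, ((1/2) * (2 ^ d * ∫ z in Q, h z)) := by
      refine integral_mono_of_nonneg (ae_of_all _ hA0) (integrable_const _) ?_
      exact (ae_restrict_iff' hQm).2 (ae_of_all _ hP1)
    have hc : (∫ _x in Q, ((1/2) * ((2:ℝ) ^ d * ∫ z in Q, h z)))
        = η ^ d * ((1/2) * (2 ^ d * ∫ z in Q, h z)) := by
      rw [setIntegral_const, measureReal_def, hVol, smul_eq_mul]
    rw [hc] at hb
    exact hb
  have stepE : (∫ x in Q, F x) ≤ 2 ^ d * η ^ d * ∫ z in Q, h z := by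
    have hsum : (∫ x in Q, F x)
        = (∫ x in Q, ∫ y in Q, J x y) + ∫ x in Q, ∫ y in Q, J y x := by
      calc (∫ x in Q, F x)
          = ∫ x in Q, ((∫ y in Q, J x y) + ∫ y in Q, J y x) := by
            exact setIntegral_congr_fun hQm fun x _ => hFsplit x
        _ = (∫ x in Q, ∫ y in Q, J x y) + ∫ x in Q, ∫ y in Q, J y x := by
            refine integral_add ?_ ?_
            · exact Measure.integrableOn_of_bounded (M := η ^ d * Bh) hQfin
                hAc.aestronglyMeasurable (ae_of_all _ fun x => by
                  rw [Real.norm_eq_abs, abs_of_nonneg (hA0 x)]; exact hAB x)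
            · exact Measure.integrableOn_of_bounded (M := η ^ d * Bh) hQfin
                hBc.aestronglyMeasurable (ae_of_all _ fun x => by
                  rw [Real.norm_eq_abs, abs_of_nonneg (hB0 x)]; exact hBB x)
    rw [hsum, hswap]
    calc (∫ x in Q, ∫ y in Q, J x y) + ∫ y in Q, ∫ x in Q, J y x
        ≤ η ^ d * ((1/2) * (2 ^ d * ∫ z in Q, h z))
          + η ^ d * ((1/2) * (2 ^ d * ∫ z in Q, h z)) := add_le_add hintA hintA
      _ = 2 ^ d * η ^ d * ∫ z in Q, h z := by ring
  -- combine
  have hhQnonneg : 0 ≤ ∫ z in Q, h z := setIntegral_nonneg hQm fun z _ => hh0 z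
  have hchain : η ^ d * ∫ x in Q, w x * g x
      ≤ ρ * η ^ d * (∫ y in Q, g y)
        + (2 * Real.sqrt d * η) * (M2 * (2 ^ d * η ^ d * ∫ z in Q, h z)) := by
    refine le_trans stepB ?_
    have hd1 : (2 * Real.sqrt d * η) * (∫ x in Q, w x * F x)
        ≤ (2 * Real.sqrt d * η) * (M2 * (2 ^ d * η ^ d * ∫ z in Q, h z)) := by
      refine mul_le_mul_of_nonneg_left ?_ (by positivity)
      exact le_trans stepD (mul_le_mul_of_nonneg_left stepE hM2)
    exact add_le_add stepC hd1
  have hηd : (0:ℝ) < η ^ d := pow_pos hη d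
  have hfinal : (∫ x in Q, w x * g x)
      ≤ ρ * (∫ y in Q, g y) + (2 ^ (d + 1) * Real.sqrt d * M2) * η * ∫ z in Q, h z := by
    rw [← mul_le_mul_iff_right₀ hηd]
    calc η ^ d * ∫ x in Q, w x * g x
        ≤ ρ * η ^ d * (∫ y in Q, g y)
          + (2 * Real.sqrt d * η) * (M2 * (2 ^ d * η ^ d * ∫ z in Q, h z)) := hchain
      _ = η ^ d * (ρ * (∫ y in Q, g y)
          + (2 ^ (d + 1) * Real.sqrt d * M2) * η * ∫ z in Q, h z) := by ring
  simp only [hgdef, hhdef, hQdef] at hfinal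
  exact hfinal

end CellEstimate

lemma sqrt_add_le' (a b : ℝ) (ha : 0 ≤ a) (hb : 0 ≤ b) :
    Real.sqrt (a + b) ≤ Real.sqrt a + Real.sqrt b := by
  have h1 := Real.sq_sqrt ha
  have h2 := Real.sq_sqrt hb
  have h3 := Real.sqrt_nonneg a
  have h4 := Real.sqrt_nonneg b
  have : a + b ≤ (Real.sqrt a + Real.sqrt b) ^ 2 := by nlinarith
  calc Real.sqrt (a + b) ≤ Real.sqrt ((Real.sqrt a + Real.sqrt b) ^ 2) :=
        Real.sqrt_le_sqrt this
    _ = Real.sqrt a + Real.sqrt b := Real.sqrt_sq (by positivity)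

end Aux

/-- Forward direction of Theorem 2.6 (estimate (2.21)) on `Ω = ℝ^d`:
if the cell-averaged `L²` norms `η^{-d}∫_{□_γ^η}|W|²` are at most `ρ` for every
`γ ∈ ℤ^d`, then `‖Wu‖_{L²} ≤ C(ρ^{1/2} + η^{1/2})‖u‖_{H¹}` for every `C¹` compactly
supported `u`, with `C` depending only on `d`, `n`, `M`. -/
theorem stmt_8 (d n : ℕ) (hd : 1 ≤ d) (hn : 1 ≤ n) (M : ℝ) (hM : 0 ≤ M) :
    ∃ C : ℝ, 0 < C ∧
      ∀ (W : Ed d → Matrix (Fin n) (Fin n) ℂ),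
        (∀ p q, Measurable fun x => W x p q) →
        (∀ᵐ x, frob (W x) ≤ M) →
        ∀ (η ρ : ℝ), 0 < η → η ≤ 1 → 0 ≤ ρ →
        (∀ γ : Fin d → ℤ, (η ^ d)⁻¹ * ∫ x in cell d η γ, (frob (W x)) ^ 2 ≤ ρ) →
        ∀ u : Ed d → Cn n, ContDiff ℝ 1 u → HasCompactSupport u →
          Real.sqrt (∫ x, ‖matAct (W x) (u x)‖ ^ 2)
            ≤ C * (Real.sqrt ρ + Real.sqrt η) * hnorm u := by
  classical
  set K : ℝ := 2 ^ (d + 1) * Real.sqrt d * M ^ 2 with hKdef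
  have hK0 : 0 ≤ K := by positivity
  refine ⟨1 + Real.sqrt K, by positivity, ?_⟩
  intro W hWm hWb η ρ hη hη1 hρ hcells u hu hsupp
  -- the weight and the two energy densities
  set w : Ed d → ℝ := fun x => frob (W x) ^ 2 with hwdef
  set g : Ed d → ℝ := fun x => ‖u x‖ ^ 2 with hgdef
  set D : Ed d → ℝ := fun x => ‖fderiv ℝ u x‖ ^ 2 with hDdef
  set h : Ed d → ℝ := fun x => ‖u x‖ * ‖fderiv ℝ u x‖ with hhdef
  have hgc : Continuous g := (hu.continuous.norm).pow 2
  have hfdc : Continuous fun z => fderiv ℝ u z := hu.continuous_fderiv one_ne_zero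
  have hDc : Continuous D := (hfdc.norm).pow 2
  have hhc : Continuous h := (hu.continuous.norm).mul hfdc.norm
  have hg0 : ∀ x, 0 ≤ g x := fun x => sq_nonneg _
  have hD0 : ∀ x, 0 ≤ D x := fun x => sq_nonneg _
  have hh0 : ∀ x, 0 ≤ h x := fun x => mul_nonneg (norm_nonneg _) (norm_nonneg _)
  have hw0 : ∀ x, 0 ≤ w x := fun x => sq_nonneg _
  -- measurability of the weight
  have hwm : Measurable w := by
    have hw_eq : w = fun x => ∑ p, ∑ q, ‖W x p q‖ ^ 2 := by
      funext x
      rw [hwdef]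
      exact Real.sq_sqrt (Finset.sum_nonneg fun p _ =>
        Finset.sum_nonneg fun q _ => sq_nonneg _)
    rw [hw_eq]
    exact Finset.measurable_sum _ fun p _ =>
      Finset.measurable_sum _ fun q _ => ((hWm p q).norm.pow_const 2)
  have hwb : ∀ᵐ x, w x ≤ M ^ 2 := by
    refine hWb.mono fun x hx => ?_
    have h0 : 0 ≤ frob (W x) := Real.sqrt_nonneg _
    rw [hwdef]
    show frob (W x) ^ 2 ≤ M ^ 2
    nlinarith
  -- compact supports and integrability
  have hgs : HasCompactSupport g := hsupp.comp_left (g := fun z : Cn n => ‖z‖ ^ 2) (by simp)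
  have hDs : HasCompactSupport D :=
    (hsupp.fderiv (𝕜 := ℝ)).comp_left (g := fun L : Ed d →L[ℝ] Cn n => ‖L‖ ^ 2) (by simp)
  have hhs : HasCompactSupport h := (hsupp.norm).mul_right
  have hgi : Integrable g := hgc.integrable_of_hasCompactSupport hgs
  have hDi : Integrable D := hDc.integrable_of_hasCompactSupport hDs
  have hhi : Integrable h := hhc.integrable_of_hasCompactSupport hhs
  have hwgi : Integrable (fun x => w x * g x) := by
    refine Integrable.bdd_mul (c := M ^ 2) hgi hwm.aestronglyMeasurable ?_
    refine hwb.mono fun x hx => ?_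
    rwa [Real.norm_eq_abs, abs_of_nonneg (hw0 x)]
  -- step 1 : pointwise Frobenius bound
  have step1 : (∫ x, ‖matAct (W x) (u x)‖ ^ 2) ≤ ∫ x, w x * g x := by
    refine integral_mono_of_nonneg (ae_of_all _ fun x => sq_nonneg _) hwgi
      (ae_of_all _ fun x => ?_)
    exact matAct_norm_le (W x) (u x)
  -- step 2 : decompose into half-open cells
  have key : ∀ f : Ed d → ℝ, Integrable f →
      HasSum (fun γ : Fin d → ℤ => ∫ x in cell0 d η γ, f x) (∫ x, f x) := by
    intro f hf
    have := hasSum_integral_iUnion (fun γ : Fin d → ℤ => measurableSet_cell0 η γ)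
      (pairwise_disjoint_cell0 hη) hf.integrableOn
    rwa [iUnion_cell0 hη, Measure.restrict_univ] at this
  have hA := key _ hwgi
  have hB := key _ hgi
  have hH := key _ hhi
  -- step 3 : per-cell estimate
  have percell : ∀ γ : Fin d → ℤ,
      (∫ x in cell0 d η γ, w x * g x)
        ≤ ρ * (∫ x in cell0 d η γ, g x) + (K * η) * ∫ x in cell0 d η γ, h x := by
    intro γ
    have hae := cell_ae_eq_cell0 (d := d) hη.le γ
    have hcw : (∫ x in cell d η γ, w x) ≤ ρ * η ^ d := by
      have hc := hcells γ
      have hηd : (0:ℝ) < η ^ d := pow_pos hη d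
      rw [inv_mul_le_iff₀ hηd] at hc
      calc (∫ x in cell d η γ, w x) ≤ η ^ d * ρ := hc
        _ = ρ * η ^ d := mul_comm _ _
    have hest := cell_estimate (M2 := M ^ 2) hu hsupp hwm hw0 hwb (by positivity)
      hη hρ γ hcw
    have e1 : (∫ x in cell0 d η γ, w x * g x) = ∫ x in cell d η γ, w x * g x :=
      setIntegral_congr_set hae.symm
    have e2 : (∫ x in cell0 d η γ, g x) = ∫ x in cell d η γ, g x :=
      setIntegral_congr_set hae.symm
    have e3 : (∫ x in cell0 d η γ, h x) = ∫ x in cell d η γ, h x :=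
      setIntegral_congr_set hae.symm
    rw [e1, e2, e3]
    calc (∫ x in cell d η γ, w x * g x)
        ≤ ρ * (∫ x in cell d η γ, g x)
          + (2 ^ (d + 1) * Real.sqrt d * M ^ 2) * η * ∫ x in cell d η γ, h x := hest
      _ = ρ * (∫ x in cell d η γ, g x) + (K * η) * ∫ x in cell d η γ, h x := by
          rw [hKdef]
  -- step 4 : sum over cells
  have hRHSsum : HasSum
      (fun γ : Fin d → ℤ => ρ * (∫ x in cell0 d η γ, g x) + (K * η) * ∫ x in cell0 d η γ, h x)
      (ρ * (∫ x, g x) + (K * η) * ∫ x, h x) := (hB.mul_left ρ).add (hH.mul_left (K * η))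
  have step2 : (∫ x, w x * g x) ≤ ρ * (∫ x, g x) + (K * η) * ∫ x, h x := by
    rw [← hA.tsum_eq, ← hRHSsum.tsum_eq]
    exact hA.summable.tsum_le_tsum percell hRHSsum.summable
  -- step 5 : bound ∫h by the energies
  have step3 : (∫ x, h x) ≤ (∫ x, g x) + ∫ x, D x := by
    have hmono : (∫ x, h x) ≤ ∫ x, (g x + D x) := by
      refine integral_mono hhi (hgi.add hDi) fun x => ?_
      have h1 := norm_nonneg (u x)
      have h2 := norm_nonneg (fderiv ℝ u x)
      simp only [hhdef, hgdef, hDdef]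
      nlinarith [sq_nonneg (‖u x‖ - ‖fderiv ℝ u x‖)]
    rwa [integral_add hgi hDi] at hmono
  -- assemble
  set S : ℝ := (∫ x, g x) + ∫ x, D x with hSdef
  have hS0 : 0 ≤ S := add_nonneg (integral_nonneg hg0) (integral_nonneg hD0)
  have hgS : (∫ x, g x) ≤ S := le_add_of_nonneg_right (integral_nonneg hD0)
  have hfin : (∫ x, w x * g x) ≤ (ρ + K * η) * S := by
    calc (∫ x, w x * g x) ≤ ρ * (∫ x, g x) + (K * η) * ∫ x, h x := step2
      _ ≤ ρ * S + (K * η) * S := by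
          refine add_le_add (mul_le_mul_of_nonneg_left hgS hρ) ?_
          exact mul_le_mul_of_nonneg_left step3 (by positivity)
      _ = (ρ + K * η) * S := by ring
  have hnorm_eq : hnorm u = Real.sqrt S := by rw [hnorm, hSdef, hgdef, hDdef]
  have hnorm0 : 0 ≤ hnorm u := by rw [hnorm_eq]; exact Real.sqrt_nonneg _
  have hsq : Real.sqrt (∫ x, ‖matAct (W x) (u x)‖ ^ 2)
      ≤ Real.sqrt (ρ + K * η) * hnorm u := by
    rw [hnorm_eq, ← Real.sqrt_mul (by positivity) S]
    exact Real.sqrt_le_sqrt (le_trans step1 hfin)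
  refine le_trans hsq ?_
  refine mul_le_mul_of_nonneg_right ?_ hnorm0
  calc Real.sqrt (ρ + K * η) ≤ Real.sqrt ρ + Real.sqrt (K * η) :=
        sqrt_add_le' _ _ hρ (by positivity)
    _ = Real.sqrt ρ + Real.sqrt K * Real.sqrt η := by rw [Real.sqrt_mul hK0]
    _ ≤ (1 + Real.sqrt K) * (Real.sqrt ρ + Real.sqrt η) := by
        have h1 := Real.sqrt_nonneg ρ
        have h2 := Real.sqrt_nonneg η
        have h3 := Real.sqrt_nonneg K
        nlinarith

end
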